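/- (Fast time-scale inverter feasibility.) Let Ξ be convex, let the fast time-scale disturbance process satisfy quasi-stationarity, fix a ∈ ℝ^{2n}, c ∈ ℝ^{3n}, and s > 0. Suppose that for every ξ = (1, ξ(0), …, ξ(T−1)) ∈ Ξ and every t = 0,…,T−1, (a'·u(t;ξ))² + (c'·ξ(t))² ≤ s². Then for every t = 0,…,T−1 and every k = 0,…,K−1, (a'·u(k,t))² + (c'·ξ(k,t))² ≤ s². -/

import Mathlib

open Matrix

/-- Slow time-scale average `ξ̄(t) = (1/K)·Σ_{ℓ=0}^{K−1} ξ(ℓ,t)` of a fast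
time-scale disturbance process `ξ(k,t)`. -/
noncomputable def slowAvg {ι : Type*} (K : ℕ) (ξ : ℕ → ℕ → ι → ℝ) (t : ℕ) :
    ι → ℝ :=
  (K : ℝ)⁻¹ • ∑ ℓ ∈ Finset.range K, ξ ℓ t

/-- Slow time-scale affine input `u(t;ξ) = ū(t) + Σ_{s=0}^{t} Q(t,s) ξ(s)`.
Inputs live in `ℝ^{2n} ≃ (Fin n × Fin 2 → ℝ)` and disturbance blocks in
`ℝ^{3n} ≃ (Fin n × Fin 3 → ℝ)`. -/
def uslow {n : ℕ} (ubar : ℕ → Fin n × Fin 2 → ℝ)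
    (Q : ℕ → ℕ → Matrix (Fin n × Fin 2) (Fin n × Fin 3) ℝ)
    (ζ : ℕ → Fin n × Fin 3 → ℝ) (t : ℕ) : Fin n × Fin 2 → ℝ :=
  ubar t + ∑ s ∈ Finset.range (t + 1), (Q t s).mulVec (ζ s)

/-- Fast time-scale input
`u(k,t) = ū(t) + Q(t,t) ξ(k,t) + Σ_{s=0}^{t−1} Q(t,s) ξ̄(s)`. -/
noncomputable def ufast {n : ℕ} (K : ℕ) (ubar : ℕ → Fin n × Fin 2 → ℝ)
    (Q : ℕ → ℕ → Matrix (Fin n × Fin 2) (Fin n × Fin 3) ℝ)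
    (ξ : ℕ → ℕ → Fin n × Fin 3 → ℝ) (k t : ℕ) : Fin n × Fin 2 → ℝ :=
  ubar t + (Q t t).mulVec (ξ k t)
    + ∑ s ∈ Finset.range t, (Q t s).mulVec (slowAvg K ξ s)

/-- fast time-scale inverter feasibility: if the affine policy
robustly satisfies the apparent power capacity constraint
`(a'·u(t;ξ))² + (c'·ξ(t))² ≤ s²` for every slow time-scale trajectory in `Ξ`,
then the same bound holds for the fast time-scale inputs and disturbances. -/
theorem statement_7 (n T K : ℕ) (hn : 0 < n) (hT : 0 < T) (hK : 0 < K)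
    (Ξ : Set (ℝ × (Fin T → Fin n × Fin 3 → ℝ))) (hconv : Convex ℝ Ξ)
    (ξ : ℕ → ℕ → Fin n × Fin 3 → ℝ)
    (hquasi : ∀ f : ℕ → ℕ, (∀ t, f t < K) →
      ((1 : ℝ), fun t : Fin T => ξ (f t) t) ∈ Ξ)
    (ubar : ℕ → Fin n × Fin 2 → ℝ)
    (Q : ℕ → ℕ → Matrix (Fin n × Fin 2) (Fin n × Fin 3) ℝ)
    (a : Fin n × Fin 2 → ℝ) (c : Fin n × Fin 3 → ℝ) (s : ℝ) (hs : 0 < s)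
    (hslow : ∀ ζ : ℕ → Fin n × Fin 3 → ℝ,
      ((1 : ℝ), fun r : Fin T => ζ r) ∈ Ξ → ∀ t < T,
        (a ⬝ᵥ uslow ubar Q ζ t) ^ 2 + (c ⬝ᵥ ζ t) ^ 2 ≤ s ^ 2) :
    ∀ t < T, ∀ k < K,
      (a ⬝ᵥ ufast K ubar Q ξ k t) ^ 2 + (c ⬝ᵥ ξ k t) ^ 2 ≤ s ^ 2 := by
  intro t ht k hk
  set ζ : ℕ → Fin n × Fin 3 → ℝ :=
    fun r => if r = t then ξ k r else slowAvg K ξ r with hζ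
  have hmem : ((1 : ℝ), fun r : Fin T => ζ r) ∈ Ξ := by
    have hsum := hconv.sum_mem (t := Finset.range K)
      (w := fun _ => (K : ℝ)⁻¹)
      (z := fun ℓ => ((1 : ℝ),
        fun r : Fin T => ξ (if (r : ℕ) = t then k else ℓ) r))
      (fun i _ => by positivity)
      (by
        rw [Finset.sum_const, Finset.card_range, nsmul_eq_mul]
        field_simp)
      (fun ℓ hℓ => hquasi (fun r => if r = t then k else ℓ)
        (fun r => by
          split
          · exact hk
          · exact Finset.mem_range.mp hℓ))
    convert hsum using 1
    refine Prod.ext ?_ ?_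
    · simp only [Prod.fst_sum, Prod.smul_mk, smul_eq_mul, mul_one,
        Finset.sum_const, Finset.card_range, nsmul_eq_mul]
      field_simp
    · simp only [Prod.snd_sum, Prod.smul_mk]
      funext r
      by_cases hr : (r : ℕ) = t
      · simp only [hζ, hr, if_true]
        rw [Finset.sum_apply]
        simp only [Pi.smul_apply, hr, if_true]
        rw [Finset.sum_const, Finset.card_range, nsmul_eq_mul]
        funext x
        have hKne : (K : ℝ) ≠ 0 := Nat.cast_ne_zero.mpr hK.ne'
        simp only [Pi.mul_apply, Pi.natCast_apply, Pi.smul_apply, smul_eq_mul]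
        field_simp
      · simp only [hζ, hr, if_false]
        rw [Finset.sum_apply]
        simp only [Pi.smul_apply, hr, if_false]
        unfold slowAvg
        rw [Finset.smul_sum]
  have h1 : ζ t = ξ k t := by simp [hζ]
  have h2 : uslow ubar Q ζ t = ufast K ubar Q ξ k t := by
    unfold uslow ufast
    rw [Finset.sum_range_succ]
    have hcg : ∀ r ∈ Finset.range t,
        (Q t r).mulVec (ζ r) = (Q t r).mulVec (slowAvg K ξ r) := by
      intro r hr
      have : r ≠ t := (Finset.mem_range.mp hr).ne
      simp [hζ, this]
    rw [Finset.sum_congr rfl hcg, h1]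
    abel
  have hb := hslow ζ hmem t ht
  rwa [h2, h1] at hb
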